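/- Let V be a 2N-dimensional symplectic vector space with form ω̄, and let sp(V) have the elements f^{ij}, f_{ij} as defined. Then the identity Σ_{i,j=1}^{2N} ω_{ij} [f^{ia}, f^{jb}] = -(N+1) f^{ab} holds in sp(V) for all 1 ≤ a,b ≤ 2N. -/

import Mathlib

open scoped BigOperators

namespace SpSetup

variable {k : Type*} [Field k] [CharZero k]
variable {V : Type*} [AddCommGroup V] [Module k V] [FiniteDimensional k V]
variable {N : ℕ}

/-- `∂^i = Σ_j r^{ij} ∂_j`. -/
noncomputable def dualVec (b : Module.Basis (Fin (2 * N)) k V) (r : Fin (2 * N) → Fin (2 * N) → k)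
    (i : Fin (2 * N)) : V := ∑ j, r i j • b j

/-- `e^{ij} = ∂^i ⊗ x^j ∈ End V`. -/
noncomputable def E (b : Module.Basis (Fin (2 * N)) k V) (r : Fin (2 * N) → Fin (2 * N) → k)
    (i j : Fin (2 * N)) : Module.End k V :=
  LinearMap.smulRight (b.coord j) (dualVec b r i)

/-- `f^{ij} = -(1/2)(e^{ij} + e^{ji})`. -/
noncomputable def F (b : Module.Basis (Fin (2 * N)) k V) (r : Fin (2 * N) → Fin (2 * N) → k)
    (i j : Fin (2 * N)) : Module.End k V :=
  (-(2 : k)⁻¹) • (E b r i j + E b r j i)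

end SpSetup

namespace SpSetup
variable {k : Type*} [Field k] [CharZero k]
variable {V : Type*} [AddCommGroup V] [Module k V] [FiniteDimensional k V]
variable {N : ℕ}

set_option linter.unusedSectionVars false

lemma repr_dualVec (b : Module.Basis (Fin (2 * N)) k V) (r : Fin (2 * N) → Fin (2 * N) → k)
    (i j : Fin (2 * N)) : b.repr (dualVec b r i) j = r i j := by
  simp [dualVec, Finsupp.single_apply]

lemma E_mul (b : Module.Basis (Fin (2 * N)) k V) (r : Fin (2 * N) → Fin (2 * N) → k)
    (i j p q : Fin (2 * N)) : E b r i j * E b r p q = r p j • E b r i q := by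
  ext v
  simp [E, Module.End.mul_apply, Module.Basis.coord_apply, repr_dualVec, smul_smul, mul_comm]

lemma lie_E (b : Module.Basis (Fin (2 * N)) k V) (r : Fin (2 * N) → Fin (2 * N) → k)
    (i j p q : Fin (2 * N)) :
    ⁅E b r i j, E b r p q⁆ = r p j • E b r i q - r i q • E b r p j := by
  rw [Ring.lie_def, E_mul, E_mul]

lemma lie_F (b : Module.Basis (Fin (2 * N)) k V) (r : Fin (2 * N) → Fin (2 * N) → k)
    (i a j c : Fin (2 * N)) :
    ⁅F b r i a, F b r j c⁆ = (4 : k)⁻¹ •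
      (⁅E b r i a, E b r j c⁆ + ⁅E b r i a, E b r c j⁆ +
       ⁅E b r a i, E b r j c⁆ + ⁅E b r a i, E b r c j⁆) := by
  simp only [F, Ring.lie_def, add_mul, mul_add, smul_mul_assoc, mul_smul_comm, smul_add, smul_sub]
  module

lemma E_apply_basis (b : Module.Basis (Fin (2 * N)) k V) (r : Fin (2 * N) → Fin (2 * N) → k)
    (i j l : Fin (2 * N)) :
    E b r i j (b l) = if l = j then dualVec b r i else 0 := by
  simp [E, Module.Basis.coord_apply, Finsupp.single_apply, ite_smul]

end SpSetup

open SpSetup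

/-- Let `V` be a `2N`-dimensional symplectic vector space with form `ω̄`,
and `f^{ij} ∈ sp(V)` as defined.  Then
`Σ_{i,j=1}^{2N} ω_{ij} [f^{ia}, f^{jb}] = -(N+1) f^{ab}` for all `1 ≤ a,b ≤ 2N`. -/
theorem sp_omega_bracket_sum {k : Type*} [Field k] [CharZero k]
    {V : Type*} [AddCommGroup V] [Module k V] [FiniteDimensional k V]
    (N : ℕ) (ω : V →ₗ[k] V →ₗ[k] k) (hskew : ∀ u v : V, ω u v = -ω v u)
    (b : Module.Basis (Fin (2 * N)) k V) (r : Fin (2 * N) → Fin (2 * N) → k)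
    (hr : ∀ i l : Fin (2 * N),
      (∑ j, r i j * ω (b j) (b l)) = if i = l then 1 else 0)
    (hr' : ∀ i l : Fin (2 * N),
      (∑ j, ω (b i) (b j) * r j l) = if i = l then 1 else 0)
    (a c : Fin (2 * N)) :
    (∑ i, ∑ j, ω (b i) (b j) • ⁅F b r i a, F b r j c⁆) =
      (-((N : k) + 1)) • F b r a c := by
  -- skew-symmetry of r
  have rskew : ∀ p q : Fin (2 * N), r q p = - r p q := by
    intro p q
    have h1 : (∑ i, (∑ j, r p j * ω (b j) (b i)) * r q i) = r q p := by
      simp only [hr]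
      simp [ite_mul]
    have h2 : (∑ i, (∑ j, r p j * ω (b j) (b i)) * r q i) = - r p q := by
      calc (∑ i, (∑ j, r p j * ω (b j) (b i)) * r q i)
          = ∑ i, ∑ j, r p j * ω (b j) (b i) * r q i := by
            simp [Finset.sum_mul]
        _ = ∑ j, ∑ i, -(r q i * ω (b i) (b j) * r p j) := by
            rw [Finset.sum_comm]
            refine Finset.sum_congr rfl fun j _ => Finset.sum_congr rfl fun i _ => ?_
            rw [hskew (b j) (b i)]; ring
        _ = -∑ j, (∑ i, r q i * ω (b i) (b j)) * r p j := by
            simp [Finset.sum_mul, Finset.sum_neg_distrib]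
        _ = - r p q := by
            simp only [hr]
            simp [ite_mul]
    rw [← h1, h2]
  -- operator sum identities
  have hsumE1 : (∑ i, ∑ j, ω (b i) (b j) • E b r i j) = (-1 : Module.End k V) := by
    refine b.ext fun l => ?_
    have key : ∀ m : Fin (2 * N), (∑ i, ω (b i) (b l) * r i m) = -(if l = m then (1:k) else 0) := by
      intro m
      calc (∑ i, ω (b i) (b l) * r i m) = -∑ i, ω (b l) (b i) * r i m := by
            rw [← Finset.sum_neg_distrib]
            refine Finset.sum_congr rfl fun i _ => ?_
            rw [hskew (b i) (b l)]; ring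
        _ = _ := by rw [hr' l m]
    calc (∑ i, ∑ j, ω (b i) (b j) • E b r i j) (b l)
        = ∑ i, ∑ j, ω (b i) (b j) • (E b r i j (b l)) := by
          simp [LinearMap.sum_apply]
      _ = ∑ i, ω (b i) (b l) • dualVec b r i := by
          refine Finset.sum_congr rfl fun i _ => ?_
          simp [E_apply_basis, smul_ite, Finset.sum_ite_eq]
      _ = ∑ m, (∑ i, ω (b i) (b l) * r i m) • b m := by
          simp only [dualVec, Finset.smul_sum, smul_smul]
          rw [Finset.sum_comm]
          simp [Finset.sum_smul]
      _ = -(b l) := by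
          simp only [key]
          simp [ite_smul, Finset.sum_ite_eq]
      _ = (-1 : Module.End k V) (b l) := by simp
  have hsumE2 : (∑ i, ∑ j, ω (b i) (b j) • E b r j i) = (1 : Module.End k V) := by
    refine b.ext fun l => ?_
    calc (∑ i, ∑ j, ω (b i) (b j) • E b r j i) (b l)
        = ∑ i, ∑ j, ω (b i) (b j) • (E b r j i (b l)) := by
          simp [LinearMap.sum_apply]
      _ = ∑ j, ω (b l) (b j) • dualVec b r j := by
          rw [Finset.sum_comm]
          refine Finset.sum_congr rfl fun j _ => ?_
          simp [E_apply_basis, smul_ite, Finset.sum_ite_eq]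
      _ = ∑ m, (∑ j, ω (b l) (b j) * r j m) • b m := by
          simp only [dualVec, Finset.smul_sum, smul_smul]
          rw [Finset.sum_comm]
          simp [Finset.sum_smul]
      _ = b l := by
          simp only [hr']
          simp [ite_smul, Finset.sum_ite_eq]
      _ = (1 : Module.End k V) (b l) := by simp
  -- scalar trace identities
  have htr1 : (∑ i, ∑ j, ω (b i) (b j) * r j i) = 2 * (N : k) := by
    simp only [hr']
    simp [Finset.card_univ]
  have htr2 : (∑ i, ∑ j, ω (b i) (b j) * r i j) = -(2 * (N : k)) := by
    calc (∑ i, ∑ j, ω (b i) (b j) * r i j)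
        = -∑ i, ∑ j, ω (b i) (b j) * r j i := by
          simp only [← Finset.sum_neg_distrib]
          refine Finset.sum_congr rfl fun i _ => Finset.sum_congr rfl fun j _ => ?_
          rw [rskew j i]; ring
      _ = _ := by rw [htr1]
  -- the eight contraction sums
  have hS1 : (∑ i, ∑ j, ω (b i) (b j) • (r j a • E b r i c)) = E b r a c := by
    have h : ∀ i, (∑ j, ω (b i) (b j) • (r j a • E b r i c))
        = (∑ j, ω (b i) (b j) * r j a) • E b r i c := by
      intro i; rw [Finset.sum_smul]; simp [smul_smul]
    simp only [h, hr']
    simp [ite_smul, Finset.sum_ite_eq']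
  have hS2 : (∑ i, ∑ j, ω (b i) (b j) • (r i c • E b r j a)) = -(E b r c a) := by
    have key : ∀ j, (∑ i, ω (b i) (b j) * r i c) = -(if c = j then (1:k) else 0) := by
      intro j
      calc (∑ i, ω (b i) (b j) * r i c) = -∑ i, r c i * ω (b i) (b j) := by
            rw [← Finset.sum_neg_distrib]
            refine Finset.sum_congr rfl fun i _ => ?_
            rw [rskew c i]; ring
        _ = _ := by rw [hr c j]
    rw [Finset.sum_comm]
    have h : ∀ j, (∑ i, ω (b i) (b j) • (r i c • E b r j a))
        = (∑ i, ω (b i) (b j) * r i c) • E b r j a := by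
      intro j; rw [Finset.sum_smul]; simp [smul_smul]
    simp only [h, key]
    simp [ite_smul, Finset.sum_ite_eq]
  have hS3 : (∑ i, ∑ j, ω (b i) (b j) • (r c a • E b r i j))
      = r c a • (-1 : Module.End k V) := by
    have h : ∀ i j, ω (b i) (b j) • (r c a • E b r i j)
        = r c a • (ω (b i) (b j) • E b r i j) := fun i j => smul_comm _ _ _
    simp only [h, ← Finset.smul_sum, hsumE1]
  have hS4 : (∑ i, ∑ j, ω (b i) (b j) • (r i j • E b r c a))
      = (-(2 * (N : k))) • E b r c a := by
    calc (∑ i, ∑ j, ω (b i) (b j) • (r i j • E b r c a))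
        = (∑ i, ∑ j, ω (b i) (b j) * r i j) • E b r c a := by
          simp [Finset.sum_smul, smul_smul]
      _ = _ := by rw [htr2]
  have hS5 : (∑ i, ∑ j, ω (b i) (b j) • (r j i • E b r a c))
      = (2 * (N : k)) • E b r a c := by
    calc (∑ i, ∑ j, ω (b i) (b j) • (r j i • E b r a c))
        = (∑ i, ∑ j, ω (b i) (b j) * r j i) • E b r a c := by
          simp [Finset.sum_smul, smul_smul]
      _ = _ := by rw [htr1]
  have hS6 : (∑ i, ∑ j, ω (b i) (b j) • (r a c • E b r j i))
      = r a c • (1 : Module.End k V) := by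
    have h : ∀ i j, ω (b i) (b j) • (r a c • E b r j i)
        = r a c • (ω (b i) (b j) • E b r j i) := fun i j => smul_comm _ _ _
    simp only [h, ← Finset.smul_sum, hsumE2]
  have hS7 : (∑ i, ∑ j, ω (b i) (b j) • (r c i • E b r a j)) = E b r a c := by
    have key : ∀ j, (∑ i, ω (b i) (b j) * r c i) = (if c = j then (1:k) else 0) := by
      intro j
      rw [← hr c j]
      exact Finset.sum_congr rfl fun i _ => mul_comm _ _
    rw [Finset.sum_comm]
    have h : ∀ j, (∑ i, ω (b i) (b j) • (r c i • E b r a j))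
        = (∑ i, ω (b i) (b j) * r c i) • E b r a j := by
      intro j; rw [Finset.sum_smul]; simp [smul_smul]
    simp only [h, key]
    simp [ite_smul, Finset.sum_ite_eq]
  have hS8 : (∑ i, ∑ j, ω (b i) (b j) • (r a j • E b r c i)) = -(E b r c a) := by
    have key : ∀ i, (∑ j, ω (b i) (b j) * r a j) = -(if a = i then (1:k) else 0) := by
      intro i
      calc (∑ j, ω (b i) (b j) * r a j) = -∑ j, r a j * ω (b j) (b i) := by
            rw [← Finset.sum_neg_distrib]
            refine Finset.sum_congr rfl fun j _ => ?_
            rw [hskew (b i) (b j)]; ring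
        _ = _ := by rw [hr a i]
    have h : ∀ i, (∑ j, ω (b i) (b j) • (r a j • E b r c i))
        = (∑ j, ω (b i) (b j) * r a j) • E b r c i := by
      intro i; rw [Finset.sum_smul]; simp [smul_smul]
    simp only [h, key]
    simp [ite_smul, Finset.sum_ite_eq]
  -- assemble
  have expand : (∑ i, ∑ j, ω (b i) (b j) •
      (⁅E b r i a, E b r j c⁆ + ⁅E b r i a, E b r c j⁆ +
       ⁅E b r a i, E b r j c⁆ + ⁅E b r a i, E b r c j⁆))
      = (E b r a c - -(E b r c a))
        + (r c a • (-1 : Module.End k V) - (-(2 * (N : k))) • E b r c a)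
        + ((2 * (N : k)) • E b r a c - r a c • (1 : Module.End k V))
        + (E b r a c - -(E b r c a)) := by
    simp only [lie_E, smul_add, smul_sub, Finset.sum_add_distrib, Finset.sum_sub_distrib]
    rw [hS1, hS2, hS3, hS4, hS5, hS6, hS7, hS8]
  calc (∑ i, ∑ j, ω (b i) (b j) • ⁅F b r i a, F b r j c⁆)
      = (4 : k)⁻¹ • (∑ i, ∑ j, ω (b i) (b j) •
          (⁅E b r i a, E b r j c⁆ + ⁅E b r i a, E b r c j⁆ +
           ⁅E b r a i, E b r j c⁆ + ⁅E b r a i, E b r c j⁆)) := by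
        simp only [lie_F]
        have hc : ∀ (s : k) (x : Module.End k V),
            s • ((4:k)⁻¹ • x) = (4:k)⁻¹ • (s • x) := fun s x => smul_comm _ _ _
        simp only [hc, ← Finset.smul_sum]
    _ = (-((N : k) + 1)) • F b r a c := by
        rw [expand, rskew a c, F]
        module
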